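/- arXiv:2510.16117 — 4 statements merged into one kernel-verified Lean document; each statement's English description precedes it below -/
import Mathlib

section
/- A two-term pure state a|j⟩ + b|j'⟩ on n qubits, with a, b nonzero complex numbers and j ≠ j' binary strings of length n, is a product state (fully separable across all n tensor factors) if and only if the Hamming distance between j and j' equals 1. -/
open scoped TensorProduct PiTensorProduct

/-- The computational basis vector `|j⟩` of `(ℂ²)^⊗n` indexed by a binary string `j`. -/
noncomputable def basisVec {n : ℕ} (j : Fin n → Fin 2) :
    ⨂[ℂ] _ : Fin n, (Fin 2 → ℂ) :=
  PiTensorProduct.tprod ℂ (fun i => fun k => if k = j i then (1 : ℂ) else 0)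

/-- A vector of `(ℂ²)^⊗n` is a product (fully separable) state if it is an elementary
tensor of single-qubit vectors. -/
def IsProductState {n : ℕ} (v : ⨂[ℂ] _ : Fin n, (Fin 2 → ℂ)) : Prop :=
  ∃ u : Fin n → (Fin 2 → ℂ), v = PiTensorProduct.tprod ℂ u

noncomputable def coef {n : ℕ} (k : Fin n → Fin 2) :
    (⨂[ℂ] _ : Fin n, (Fin 2 → ℂ)) →ₗ[ℂ] ℂ :=
  PiTensorProduct.lift ((MultilinearMap.mkPiAlgebra ℂ (Fin n) ℂ).compLinearMap
    (fun i => LinearMap.proj (k i)))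

theorem coef_tprod {n : ℕ} (k : Fin n → Fin 2) (u : Fin n → (Fin 2 → ℂ)) :
    coef k (PiTensorProduct.tprod ℂ u) = ∏ i, u i (k i) := by
  simp [coef]

theorem coef_basisVec {n : ℕ} (k j : Fin n → Fin 2) :
    coef k (basisVec j) = if k = j then 1 else 0 := by
  rw [basisVec, coef_tprod]
  simp only [Finset.prod_boole]
  by_cases h : k = j
  · simp [h]
  · rw [if_neg, if_neg h]
    intro hall
    exact h (funext fun i => hall i (Finset.mem_univ i))

theorem coef_state {n : ℕ} (k j j' : Fin n → Fin 2) (a b : ℂ) :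
    coef k (a • basisVec j + b • basisVec j')
      = a * (if k = j then 1 else 0) + b * (if k = j' then 1 else 0) := by
  simp [coef_basisVec]

/-- A two-term state `a|j⟩ + b|j'⟩` with `a, b ≠ 0` and `j ≠ j'` is a product state
iff the Hamming distance between `j` and `j'` is `1`. -/
theorem two_term_separable_iff_hamming_one {n : ℕ} (j j' : Fin n → Fin 2)
    (a b : ℂ) (ha : a ≠ 0) (hb : b ≠ 0) (hjj : j ≠ j') :
    IsProductState (a • basisVec j + b • basisVec j') ↔ hammingDist j j' = 1 := by
  constructor
  · rintro ⟨u, hu⟩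
    by_contra h1
    have hpos : 0 < hammingDist j j' := hammingDist_pos.mpr hjj
    have h2 : 1 < (Finset.univ.filter fun i => j i ≠ j' i).card := by
      have : hammingDist j j' = (Finset.univ.filter fun i => j i ≠ j' i).card := rfl
      omega
    obtain ⟨i₁, hi₁, i₂, hi₂, hne⟩ := Finset.one_lt_card.mp h2
    simp only [Finset.mem_filter, Finset.mem_univ, true_and] at hi₁ hi₂
    have hca : coef j (a • basisVec j + b • basisVec j') = a := by
      rw [coef_state]; simp [hjj, Ne.symm hjj]
    have hcb : coef j' (a • basisVec j + b • basisVec j') = b := by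
      rw [coef_state]; simp [hjj, Ne.symm hjj]
    set k := Function.update j i₁ (j' i₁) with hk
    have hkj : k ≠ j := by
      intro h
      apply hi₁
      rw [← h, hk, Function.update_self]
    have hkj' : k ≠ j' := by
      intro h
      apply hi₂
      rw [← h, hk, Function.update_of_ne (Ne.symm hne)]
    have hck : coef k (a • basisVec j + b • basisVec j') = 0 := by
      rw [coef_state]; simp [hkj, hkj']
    rw [hu, coef_tprod] at hca hcb hck
    obtain ⟨i, _, hiz⟩ := Finset.prod_eq_zero_iff.mp hck
    by_cases hii : i = i₁
    · subst hii
      rw [hk, Function.update_self] at hiz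
      exact hb (hcb ▸ Finset.prod_eq_zero (Finset.mem_univ i) hiz)
    · rw [hk, Function.update_of_ne hii] at hiz
      exact ha (hca ▸ Finset.prod_eq_zero (Finset.mem_univ i) hiz)
  · intro h1
    obtain ⟨i₀, hi₀⟩ := Finset.card_eq_one.mp
      ((rfl : hammingDist j j' = (Finset.univ.filter fun i => j i ≠ j' i).card) ▸ h1)
    have hmem : ∀ i : Fin n, j i ≠ j' i ↔ i = i₀ := by
      intro i
      constructor
      · intro h
        have : i ∈ Finset.univ.filter fun i => j i ≠ j' i := by simp [h]
        rw [hi₀] at this; simpa using this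
      · intro h
        subst h
        have : i ∈ Finset.univ.filter fun i => j i ≠ j' i := by rw [hi₀]; simp
        simpa using this
    set e : Fin 2 → Fin 2 → ℂ := fun x k => if k = x then 1 else 0 with he
    set f : Fin n → Fin 2 → ℂ := fun i => e (j i) with hf
    refine ⟨Function.update f i₀ (a • e (j i₀) + b • e (j' i₀)), ?_⟩
    rw [MultilinearMap.map_update_add, MultilinearMap.map_update_smul, MultilinearMap.map_update_smul,
      Function.update_eq_self]
    have hupd : Function.update f i₀ (e (j' i₀)) = fun i => e (j' i) := by
      funext i
      by_cases hii : i = i₀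
      · subst hii; rw [Function.update_self]
      · rw [Function.update_of_ne hii, hf]
        have : j i = j' i := by
          by_contra h; exact hii ((hmem i).mp h)
        simp only [this]
    rw [hupd]
    rfl
end

section
/- Let ρ be an N × N positive semidefinite matrix with all diagonal entries strictly positive, and let G be a connected graph on the index set {0,…,N−1}. If |ρ_{jk}|² = ρ_{jj}·ρ_{kk} for every edge {j,k} of G, then ρ has rank one. -/
open scoped ComplexOrder
open Matrix
open scoped MatrixOrder

/-- If `ρ` is PSD with strictly positive diagonal and the Cauchy–Schwarz inequality
`|ρ_{jk}|² = ρ_{jj} ρ_{kk}` is saturated on every edge of a connected graph `G` on the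
index set, then `ρ` has rank one. -/
theorem psd_saturated_connected_rank_one {N : ℕ} (ρ : Matrix (Fin N) (Fin N) ℂ)
    (hρ : ρ.PosSemidef) (hdiag : ∀ j, 0 < (ρ j j).re)
    (G : SimpleGraph (Fin N)) (hG : G.Connected)
    (hsat : ∀ j k, G.Adj j k → ‖ρ j k‖ ^ 2 = (ρ j j).re * (ρ k k).re) :
    ρ.rank = 1 := by
  set B := CFC.sqrt ρ with hBdef
  have hB : Bᴴ = B := (CFC.sqrt_nonneg ρ).posSemidef.1
  have hBB : B * B = ρ := CFC.sqrt_mul_sqrt_self ρ hρ.nonneg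
  -- columns of B as vectors in Euclidean space
  set v : Fin N → EuclideanSpace ℂ (Fin N) := fun j => WithLp.toLp 2 (fun i => B i j) with hvdef
  have hinner : ∀ j k, (inner ℂ (v j) (v k) : ℂ) = ρ j k := by
    intro j k
    rw [← hBB, Matrix.mul_apply]
    simp only [PiLp.inner_apply, RCLike.inner_apply, hvdef, PiLp.toLp_apply]
    refine Finset.sum_congr rfl fun i _ => ?_
    have : B j i = star (B i j) := by
      conv_lhs => rw [← hB]
      rfl
    rw [this]
    exact mul_comm _ _
  have hnorm : ∀ j, ‖v j‖ ^ 2 = (ρ j j).re := by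
    intro j
    rw [← hinner j j]
    exact_mod_cast norm_sq_eq_re_inner (𝕜 := ℂ) (v j)
  have hne : ∀ j, v j ≠ 0 := by
    intro j h
    have := hnorm j
    rw [h, norm_zero] at this
    have := hdiag j
    nlinarith [hdiag j]
  have hadj : ∀ j k, G.Adj j k → ∃ r : ℂ, r ≠ 0 ∧ v k = r • v j := by
    intro j k hjk
    have h1 : ‖(inner ℂ (v j) (v k) : ℂ)‖ = ‖v j‖ * ‖v k‖ := by
      have h2 : ‖(inner ℂ (v j) (v k) : ℂ)‖ ^ 2 = (‖v j‖ * ‖v k‖) ^ 2 := by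
        rw [hinner, hsat j k hjk, mul_pow, hnorm, hnorm]
      have h3 : (0:ℝ) ≤ ‖(inner ℂ (v j) (v k) : ℂ)‖ := norm_nonneg _
      have h4 : (0:ℝ) ≤ ‖v j‖ * ‖v k‖ := mul_nonneg (norm_nonneg _) (norm_nonneg _)
      nlinarith
    exact (norm_inner_eq_norm_iff (hne j) (hne k)).1 h1
  have hreach : ∀ j k : Fin N, G.Reachable j k → ∃ r : ℂ, r ≠ 0 ∧ v k = r • v j := by
    intro j k h
    obtain ⟨w⟩ := h
    induction w with
    | nil => exact ⟨1, one_ne_zero, (one_smul _ _).symm⟩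
    | cons h p ih =>
      obtain ⟨r, hr, hvk⟩ := ih
      obtain ⟨s, hs, hv⟩ := hadj _ _ h
      exact ⟨r * s, mul_ne_zero hr hs, by rw [hvk, hv, smul_smul]⟩
  obtain ⟨j₀⟩ := hG.nonempty
  have hρeq : ρ = Bᴴ * B := by rw [hB, hBB]
  rw [hρeq, Matrix.rank_conjTranspose_mul_self, Matrix.rank_eq_finrank_span_cols]
  have hBt : ∀ j, B.col j = WithLp.ofLp (v j) := fun j => rfl
  have hspan : Submodule.span ℂ (Set.range B.col) = Submodule.span ℂ {WithLp.ofLp (v j₀)} := by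
    apply le_antisymm
    · rw [Submodule.span_le]
      rintro _ ⟨j, rfl⟩
      obtain ⟨r, hr, hv⟩ := hreach j₀ j (hG.preconnected j₀ j)
      refine Submodule.mem_span_singleton.2 ⟨r, ?_⟩
      rw [hBt j, hv]
      rfl
    · refine Submodule.span_mono ?_
      rintro x hx
      rw [Set.mem_singleton_iff] at hx
      exact ⟨j₀, by rw [hBt j₀, hx]⟩
  rw [hspan]
  exact finrank_span_singleton (fun h => hne j₀ ((WithLp.ofLp_eq_zero 2).1 h))
end

section
/- Consider the system of equations 4·a_j·conj(a_{j+1}) = Λ_{j+1} for j = 0,…,N−2, in unknowns a₀,…,a_{N−1} ∈ ℂ with all Λ_j nonzero, together with the normalization a₀ > 0 real and |a₀| fixed. Then the unique solution is given, for even j > 0, by a_j = a₀·(conj(Λ₂)·conj(Λ₄)⋯conj(Λ_j))/(Λ₁·Λ₃⋯Λ_{j−1}), and for odd j by a_j = (1/(4a₀))·(conj(Λ₁)·conj(Λ₃)⋯conj(Λ_j))/(Λ₂·Λ₄⋯Λ_{j−1}). -/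
set_option maxHeartbeats 1000000

open Complex

/-- Analytic reconstruction along a path: if `4 a_j conj(a_{j+1}) = Λ_{j+1}` for
`j = 0,…,N−2` with all `Λ_j ≠ 0` and `a₀` real positive, then for even `j > 0`
`a_j = a₀ (conj Λ₂ ⋯ conj Λ_j)/(Λ₁ ⋯ Λ_{j−1})`, and for odd `j`
`a_j = (1/(4a₀)) (conj Λ₁ ⋯ conj Λ_j)/(Λ₂ ⋯ Λ_{j−1})`. -/
theorem path_reconstruction (N : ℕ) (a : ℕ → ℂ) (Λ : ℕ → ℂ)
    (ha0re : (a 0).im = 0) (ha0pos : 0 < (a 0).re)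
    (heq : ∀ j : ℕ, j + 1 < N → 4 * a j * (starRingEnd ℂ) (a (j + 1)) = Λ (j + 1))
    (hΛ : ∀ j : ℕ, 1 ≤ j → j < N → Λ j ≠ 0) :
    ∀ j : ℕ, j < N →
      (Even j → j ≠ 0 →
        a j = a 0 * (∏ m ∈ Finset.Icc 1 (j / 2), (starRingEnd ℂ) (Λ (2 * m)))
            / (∏ m ∈ Finset.Icc 1 (j / 2), Λ (2 * m - 1))) ∧
      (Odd j →
        a j = (1 / (4 * a 0))
            * (∏ m ∈ Finset.Icc 1 ((j + 1) / 2), (starRingEnd ℂ) (Λ (2 * m - 1)))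
            / (∏ m ∈ Finset.Icc 1 ((j - 1) / 2), Λ (2 * m))) := by
  have ha0c : (starRingEnd ℂ) (a 0) = a 0 := Complex.conj_eq_iff_im.mpr ha0re
  have ha0ne : a 0 ≠ 0 := fun h => by simp [h] at ha0pos
  have hane : ∀ j, j + 1 < N → a j ≠ 0 := by
    intro j hj h
    apply hΛ (j+1) (by omega) hj
    rw [← heq j hj, h]; ring
  have step : ∀ j, j + 1 < N →
      a (j+1) = (starRingEnd ℂ) (Λ (j+1)) / (4 * (starRingEnd ℂ) (a j)) := by
    intro j hj
    have h := heq j hj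
    have hc : (starRingEnd ℂ) (a j) ≠ 0 := by
      simpa using hane j hj
    have h2 : (starRingEnd ℂ) (a (j+1)) = Λ (j+1) / (4 * a j) := by
      field_simp [hane j hj]
      linear_combination h
    have := congrArg (starRingEnd ℂ) h2
    rw [Complex.conj_conj] at this
    rw [this, map_div₀, map_mul, map_ofNat]
  have hQ : ∀ k, 2 * k < N → (∏ m ∈ Finset.Icc 1 k, Λ (2 * m)) ≠ 0 := by
    intro k hk
    rw [Finset.prod_ne_zero_iff]
    intro m hm
    simp only [Finset.mem_Icc] at hm
    exact hΛ (2*m) (by omega) (by omega)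
  have hP : ∀ k, 2 * k - 1 < N → (∏ m ∈ Finset.Icc 1 k, Λ (2 * m - 1)) ≠ 0 := by
    intro k hk
    rw [Finset.prod_ne_zero_iff]
    intro m hm
    simp only [Finset.mem_Icc] at hm
    exact hΛ (2*m-1) (by omega) (by omega)
  have claim : ∀ j, j < N →
      (Even j → a j = a 0 * (∏ m ∈ Finset.Icc 1 (j / 2), (starRingEnd ℂ) (Λ (2 * m)))
            / (∏ m ∈ Finset.Icc 1 (j / 2), Λ (2 * m - 1))) ∧
      (Odd j → a j = (1 / (4 * a 0))
            * (∏ m ∈ Finset.Icc 1 ((j + 1) / 2), (starRingEnd ℂ) (Λ (2 * m - 1)))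
            / (∏ m ∈ Finset.Icc 1 ((j - 1) / 2), Λ (2 * m))) := by
    intro j
    induction j with
    | zero =>
      intro _
      refine ⟨fun _ => by simp, fun h => absurd h (by simp)⟩
    | succ j ih =>
      intro hjN
      have hj : j < N := by omega
      obtain ⟨he, ho⟩ := ih hj
      rcases Nat.even_or_odd j with hev | hod
      · -- j even = 2k, j+1 odd
        obtain ⟨k, hk⟩ := hev
        have hk' : j = 2 * k := by omega
        subst hk'
        constructor
        · intro h; exact absurd ((Nat.even_add_one).mp h) (by simp [even_two_mul])
        · intro _
          have h1 : (2 * k + 1 + 1) / 2 = k + 1 := by omega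
          have h2 : (2 * k + 1 - 1) / 2 = k := by omega
          have h3 : (2 * k) / 2 = k := by omega
          rw [h1, h2]
          have haj := he ⟨k, by omega⟩
          rw [h3] at haj
          have hca : (starRingEnd ℂ) (a (2 * k)) =
              a 0 * (∏ m ∈ Finset.Icc 1 k, Λ (2 * m))
                / (∏ m ∈ Finset.Icc 1 k, (starRingEnd ℂ) (Λ (2 * m - 1))) := by
            rw [haj, map_div₀, map_mul, ha0c, map_prod, map_prod]
            simp
          rw [step (2*k) (by omega), hca]
          rw [Finset.prod_Icc_succ_top (Nat.le_add_left 1 k)]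
          have e1 : 2 * (k + 1) - 1 = 2 * k + 1 := by omega
          rw [e1]
          have hQk := hQ k (by omega)
          have hPk := hP k (by omega)
          have hPck : (∏ m ∈ Finset.Icc 1 k, (starRingEnd ℂ) (Λ (2 * m - 1))) ≠ 0 := by
            rw [Finset.prod_ne_zero_iff]
            intro m hm
            simp only [Finset.mem_Icc] at hm
            simpa using hΛ (2*m-1) (by omega) (by omega)
          field_simp
      · -- j odd = 2k+1, j+1 = 2k+2 even
        obtain ⟨k, hk'⟩ := hod
        subst hk'
        constructor
        · intro _
          have h1 : (2 * k + 1 + 1) / 2 = k + 1 := by omega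
          have h2 : (2 * k + 1 - 1) / 2 = k := by omega
          rw [h1]
          have haj := ho ⟨k, by omega⟩
          rw [h1, h2] at haj
          have hca : (starRingEnd ℂ) (a (2 * k + 1)) =
              (1 / (4 * a 0)) * (∏ m ∈ Finset.Icc 1 (k+1), Λ (2 * m - 1))
                / (∏ m ∈ Finset.Icc 1 k, (starRingEnd ℂ) (Λ (2 * m))) := by
            rw [haj, map_div₀, map_mul, map_div₀, map_mul, ha0c, map_prod, map_prod]
            simp [map_ofNat]
          rw [step (2*k+1) (by omega), hca]
          rw [Finset.prod_Icc_succ_top (Nat.le_add_left 1 k) (f := fun m => (starRingEnd ℂ) (Λ (2 * m)))]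
          rw [Finset.prod_Icc_succ_top (Nat.le_add_left 1 k) (f := fun m => Λ (2 * m - 1))]
          have hQk := hQ k (by omega)
          have hPk1 := hP (k+1) (by omega)
          have hQck : (∏ m ∈ Finset.Icc 1 k, (starRingEnd ℂ) (Λ (2 * m))) ≠ 0 := by
            rw [Finset.prod_ne_zero_iff]
            intro m hm
            simp only [Finset.mem_Icc] at hm
            simpa using hΛ (2*m) (by omega) (by omega)
          field_simp
          rw [show (2 * (k + 1)) = 2 * k + 1 + 1 by omega]
        · intro h
          exact absurd (Nat.odd_iff.mp h) (by omega)
  intro j hjN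
  exact ⟨fun hev _ => (claim j hjN).1 hev, (claim j hjN).2⟩
end

section
/- The n-dimensional hypercube graph contains 2^{−n} · ∏_{i=1}^{n} (2i)^{C(n,i)} spanning trees, where C(n,i) denotes the binomial coefficient. -/
open Matrix Finset Equiv

/-- The `n`-dimensional hypercube graph on binary strings of length `n`. -/
def hypercube (n : ℕ) : SimpleGraph (Fin n → Bool) where
  Adj j k := hammingDist j k = 1
  symm := ⟨fun j k h => by simpa [hammingDist_comm] using h⟩
  loopless := ⟨fun j h => by simp [hammingDist_self] at h⟩

namespace HC

variable {m K : Type*} [Fintype m] [DecidableEq m] [Fintype K] [DecidableEq K]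

/-- squared determinant of the submatrix of `C` on the columns in `s` -/
noncomputable def detsq (C : Matrix m K ℚ) (s : Finset K) : ℚ :=
  if h : Fintype.card m = s.card then
    (det (C.submatrix id (fun i =>
      ((Fintype.equivOfCardEq (h.trans (Fintype.card_coe s).symm)) i : K)))) ^ 2
  else 0

lemma detsq_of_card_ne (C : Matrix m K ℚ) {s : Finset K} (h : Fintype.card m ≠ s.card) :
    detsq C s = 0 := dif_neg h

lemma detsq_eq (C : Matrix m K ℚ) {s : Finset K} (e : m ≃ ↥s) :
    detsq C s = (det (C.submatrix id (fun i => (e i : K)))) ^ 2 := by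
  have h : Fintype.card m = s.card := (Fintype.card_congr e).trans (Fintype.card_coe s)
  rw [detsq, dif_pos h]
  set e' := Fintype.equivOfCardEq (h.trans (Fintype.card_coe s).symm) with he'
  have hsub : C.submatrix id (fun i => ((e' i : K))) =
      (C.submatrix id (fun i => (e i : K))).submatrix id (e'.trans e.symm) := by
    ext i j
    simp [Matrix.submatrix_apply]
  rw [hsub, det_permute']
  obtain h1 | h1 := Int.units_eq_one_or (Equiv.Perm.sign (e'.trans e.symm)) <;>
    rw [h1] <;> push_cast <;> ring

lemma det_mul_transpose_eq_sum_detsq (C : Matrix m K ℚ) :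
    det (C * Cᵀ) = ∑ s : Finset K, detsq C s := by
  classical
  have step1 : det (C * Cᵀ) =
      ∑ f : m → K, (∏ i, C i (f i)) * det (Matrix.of fun v w => C v (f w)) := by
    calc det (C * Cᵀ)
        = ∑ σ : Equiv.Perm m, ((Equiv.Perm.sign σ : ℤ) : ℚ) * ∏ i, ∑ k, C (σ i) k * C i k := by
          rw [det_apply']
          refine Finset.sum_congr rfl fun σ _ => ?_
          simp [mul_apply]
      _ = ∑ σ : Equiv.Perm m, ∑ f : m → K,
            ((Equiv.Perm.sign σ : ℤ) : ℚ) * ∏ i, (C (σ i) (f i) * C i (f i)) := by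
          refine Finset.sum_congr rfl fun σ _ => ?_
          rw [Finset.prod_univ_sum, Fintype.piFinset_univ, Finset.mul_sum]
      _ = ∑ f : m → K, ∑ σ : Equiv.Perm m,
            ((Equiv.Perm.sign σ : ℤ) : ℚ) * ∏ i, (C (σ i) (f i) * C i (f i)) :=
          Finset.sum_comm
      _ = ∑ f : m → K, (∏ i, C i (f i)) *
            ∑ σ : Equiv.Perm m, ((Equiv.Perm.sign σ : ℤ) : ℚ) * ∏ i, C (σ i) (f i) := by
          refine Finset.sum_congr rfl fun f _ => ?_
          rw [Finset.mul_sum]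
          refine Finset.sum_congr rfl fun σ _ => ?_
          rw [Finset.prod_mul_distrib]
          ring
      _ = _ := by
          refine Finset.sum_congr rfl fun f _ => ?_
          congr 1
          rw [det_apply']
          simp only [Matrix.of_apply]
  rw [step1]
  have step2 : (∑ f : m → K, (∏ i, C i (f i)) * det (Matrix.of fun v w => C v (f w))) =
      ∑ f ∈ univ.filter (fun f : m → K => Function.Injective f),
        (∏ i, C i (f i)) * det (Matrix.of fun v w => C v (f w)) := by
    symm
    apply Finset.sum_subset (Finset.filter_subset _ _)
    intro f _ hf
    simp only [Finset.mem_filter, Finset.mem_univ, true_and] at hf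
    rw [Function.not_injective_iff] at hf
    obtain ⟨i, j, hij, hne⟩ := hf
    have : det (Matrix.of fun v w => C v (f w)) = 0 :=
      det_zero_of_column_eq hne (fun k => by simp [hij])
    simp [this]
  rw [step2,
    ← Finset.sum_fiberwise_of_maps_to (g := fun f : m → K => Finset.image f univ)
      (fun f _ => Finset.mem_univ _)]
  refine Finset.sum_congr rfl fun s _ => ?_
  by_cases hcard : Fintype.card m = s.card
  · have e : m ≃ ↥s := Fintype.equivOfCardEq (hcard.trans (Fintype.card_coe s).symm)
    rw [detsq_eq C e]
    set D := C.submatrix id (fun i => (e i : K)) with hD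
    have hmem : ∀ f ∈ (univ.filter (fun f : m → K => Function.Injective f)).filter
        (fun f => Finset.image f univ = s), ∀ i, f i ∈ s := by
      intro f hf i
      simp only [Finset.mem_filter, Finset.mem_univ, true_and] at hf
      rw [← hf.2]
      exact Finset.mem_image_of_mem f (Finset.mem_univ i)
    have calc2 :
        (∑ f ∈ (univ.filter (fun f : m → K => Function.Injective f)).filter
          (fun f => Finset.image f univ = s),
          (∏ i, C i (f i)) * det (Matrix.of fun v w => C v (f w))) =
        ∑ σ : Equiv.Perm m,
          (∏ i, C i ((e (σ i) : K))) * det (Matrix.of fun v w => C v ((e (σ w) : K))) := by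
      refine Finset.sum_bij' (i := fun f hf =>
          Equiv.ofBijective (fun i => e.symm ⟨f i, hmem f hf i⟩)
            ((Finite.injective_iff_bijective).mp (fun a b hab => ?_)))
        (j := fun σ _ => fun i => (e (σ i) : K)) ?_ ?_ ?_ ?_ ?_
      · simp only [Finset.mem_filter, Finset.mem_univ, true_and] at hf
        have := e.symm.injective hab
        exact hf.1 (congrArg Subtype.val this)
      · intro f hf
        exact Finset.mem_univ _
      · intro σ _
        simp only [Finset.mem_filter, Finset.mem_univ, true_and]
        constructor
        · intro a b hab
          exact σ.injective (e.injective (Subtype.ext hab))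
        · ext k
          simp only [Finset.mem_image, Finset.mem_univ, true_and]
          constructor
          · rintro ⟨i, rfl⟩; exact (e (σ i)).2
          · intro hk
            exact ⟨σ.symm (e.symm ⟨k, hk⟩), by simp⟩
      · intro f hf
        funext i
        simp
      · intro σ _
        ext k
        simp
      · intro f hf
        simp only [Equiv.ofBijective_apply, Equiv.apply_symm_apply]
    rw [calc2]
    have hdet : ∀ σ : Equiv.Perm m,
        det (Matrix.of fun v w => C v ((e (σ w) : K))) =
          ((Equiv.Perm.sign σ : ℤ) : ℚ) * det D := by
      intro σ
      have : (Matrix.of fun v w => C v ((e (σ w) : K))) = D.submatrix id σ := by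
        ext v w; simp [hD]
      rw [this, det_permute']
    have hDT : det D = ∑ σ : Equiv.Perm m,
        ((Equiv.Perm.sign σ : ℤ) : ℚ) * ∏ i, C i ((e (σ i) : K)) := by
      conv_lhs => rw [← det_transpose D, det_apply']
      refine Finset.sum_congr rfl fun σ _ => ?_
      congr 1
    calc (∑ σ : Equiv.Perm m,
          (∏ i, C i ((e (σ i) : K))) * det (Matrix.of fun v w => C v ((e (σ w) : K))))
        = det D * ∑ σ : Equiv.Perm m,
            ((Equiv.Perm.sign σ : ℤ) : ℚ) * ∏ i, C i ((e (σ i) : K)) := by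
          rw [Finset.mul_sum]
          refine Finset.sum_congr rfl fun σ _ => ?_
          rw [hdet σ]; ring
      _ = det D ^ 2 := by rw [← hDT]; ring
  · rw [detsq_of_card_ne C hcard]
    apply Finset.sum_eq_zero
    intro f hf
    simp only [Finset.mem_filter, Finset.mem_univ, true_and] at hf
    exfalso
    apply hcard
    rw [← hf.2, Finset.card_image_of_injective _ hf.1, Finset.card_univ]

section Graph

variable {V : Type*} [Fintype V] [LinearOrder V] (G : SimpleGraph V) [DecidableRel G.Adj]

/-- oriented edges -/
abbrev OE : Type _ := {p : V × V // G.Adj p.1 p.2 ∧ p.1 < p.2}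

variable (R : Type*) [CommRing R]

/-- incidence matrix -/
def Bmat : Matrix V (OE G) R := Matrix.of fun v e =>
  if v = e.1.1 then 1 else if v = e.1.2 then -1 else 0

/-- incidence matrix extended by an all-ones column -/
def Cmat : Matrix V (OE G ⊕ Unit) R :=
  Matrix.of fun v => Sum.elim (fun e => Bmat G R v e) (fun _ => 1)

variable {G R}

lemma Bmat_weighted_sum (x : V → R) (d : OE G) :
    ∑ v, x v * Bmat G R v d = x d.1.1 - x d.1.2 := by
  have hne : d.1.1 ≠ d.1.2 := ne_of_lt d.2.2
  have key : ∀ v, x v * Bmat G R v d =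
      (if v = d.1.1 then x d.1.1 else 0) + (if v = d.1.2 then - x d.1.2 else 0) := by
    intro v
    simp only [Bmat, Matrix.of_apply]
    rcases eq_or_ne v d.1.1 with h1 | h1
    · rw [if_pos h1, if_pos h1, if_neg (h1 ▸ hne), h1]; ring
    · rcases eq_or_ne v d.1.2 with h2 | h2
      · rw [if_neg h1, if_pos h2, if_neg h1, if_pos h2, h2]; ring
      · rw [if_neg h1, if_neg h2, if_neg h1, if_neg h2]; ring
  rw [Finset.sum_congr rfl fun v _ => key v, Finset.sum_add_distrib]
  simp [Finset.sum_ite_eq', sub_eq_add_neg]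

lemma Bmat_col_sum (d : OE G) : ∑ v, Bmat G R v d = 0 := by
  have := Bmat_weighted_sum (R := R) (fun _ => (1 : R)) d
  simpa using this

/-- sort an adjacent pair into an oriented edge -/
def sortPair {v u : V} (h : G.Adj v u) : OE G :=
  if hlt : v < u then ⟨(v, u), ⟨h, hlt⟩⟩
  else ⟨(u, v), ⟨h.symm, (h.ne.lt_or_gt.resolve_left hlt)⟩⟩

lemma sortPair_fst_or {v u : V} (h : G.Adj v u) :
    ((sortPair h).1 = (v, u)) ∨ ((sortPair h).1 = (u, v)) := by
  unfold sortPair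
  split_ifs <;> simp

/-- an oriented edge with the same underlying pair as a sorted pair is equal to it -/
lemma eq_sortPair {v u : V} (h : G.Adj v u) (d : OE G)
    (hd : d.1 = (v, u) ∨ d.1 = (u, v)) : d = sortPair h := by
  apply Subtype.ext
  rcases sortPair_fst_or h with h1 | h1 <;> rcases hd with h2 | h2 <;> rw [h1, h2]
  · exfalso
    have ha := (sortPair h).2.2
    rw [h1] at ha
    have hb := d.2.2
    rw [h2] at hb
    exact absurd hb (asymm ha)
  · exfalso
    have ha := (sortPair h).2.2
    rw [h1] at ha
    have hb := d.2.2
    rw [h2] at hb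
    exact absurd hb (asymm ha)

lemma Bmat_sq (v : V) (d : OE G) :
    Bmat G R v d * Bmat G R v d = if v = d.1.1 ∨ v = d.1.2 then 1 else 0 := by
  have hne : d.1.1 ≠ d.1.2 := ne_of_lt d.2.2
  simp only [Bmat, Matrix.of_apply]
  rcases eq_or_ne v d.1.1 with h1 | h1
  · rw [if_pos h1, if_pos (Or.inl h1)]; ring
  · rcases eq_or_ne v d.1.2 with h2 | h2
    · rw [if_neg h1, if_pos h2, if_pos (Or.inr h2)]; ring
    · rw [if_neg h1, if_neg h2, if_neg (by tauto)]; ring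

lemma Bmat_mul_ne {v w : V} (hvw : v ≠ w) (d : OE G) :
    Bmat G R v d * Bmat G R w d =
      if d.1 = (v, w) ∨ d.1 = (w, v) then -1 else 0 := by
  have hne : d.1.1 ≠ d.1.2 := ne_of_lt d.2.2
  simp only [Bmat, Matrix.of_apply]
  rcases eq_or_ne v d.1.1 with h1 | h1
  · rcases eq_or_ne w d.1.2 with h2 | h2
    · have hcond : (d.1 = (v, w) ∨ d.1 = (w, v)) := Or.inl (Prod.ext h1.symm h2.symm)
      rw [if_pos hcond, if_pos h1, if_neg (fun hw : w = d.1.1 => hvw (h1.trans hw.symm)),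
        if_pos h2]
      ring
    · have hcond : ¬(d.1 = (v, w) ∨ d.1 = (w, v)) := by
        rintro (h | h)
        · exact h2 (by rw [h])
        · exact hvw (by rw [h] at h1; rw [h1])
      rw [if_neg hcond, if_pos h1, if_neg (fun hw : w = d.1.1 => hvw (h1.trans hw.symm)),
        if_neg h2]
      ring
  · rcases eq_or_ne v d.1.2 with h2 | h2
    · rcases eq_or_ne w d.1.1 with h3 | h3
      · have hcond : (d.1 = (v, w) ∨ d.1 = (w, v)) := Or.inr (Prod.ext h3.symm h2.symm)
        rw [if_pos hcond, if_neg h1, if_pos h2, if_pos h3]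
        ring
      · have hcond : ¬(d.1 = (v, w) ∨ d.1 = (w, v)) := by
          rintro (h | h)
          · exact h1 (by rw [h])
          · exact h3 (by rw [h])
        rw [if_neg hcond, if_neg h1, if_pos h2, if_neg h3,
          if_neg (fun hw : w = d.1.2 => hvw (h2.trans hw.symm))]
        ring
    · have hcond : ¬(d.1 = (v, w) ∨ d.1 = (w, v)) := by
        rintro (h | h)
        · exact h1 (by rw [h])
        · exact h2 (by rw [h])
      rw [if_neg hcond, if_neg h1, if_neg h2]
      ring

lemma sum_Bmat_mul (v w : V) :
    ∑ d : OE G, Bmat G R v d * Bmat G R w d =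
      if v = w then (G.degree v : R) else if G.Adj v w then -1 else 0 := by
  rcases eq_or_ne v w with rfl | hvw
  · rw [if_pos rfl, Finset.sum_congr rfl (fun d _ => Bmat_sq v d), Finset.sum_boole]
    congr 1
    rw [SimpleGraph.degree]
    refine Finset.card_bij' (fun d _ => if v = d.1.1 then d.1.2 else d.1.1)
      (fun u hu => sortPair (by rw [SimpleGraph.mem_neighborFinset] at hu; exact hu))
      ?hi ?hj ?left ?right
    case hi =>
      intro d hd
      simp only [Finset.mem_filter, Finset.mem_univ, true_and] at hd
      rw [SimpleGraph.mem_neighborFinset]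
      rcases hd with h | h
      · rw [if_pos h, h]; exact d.2.1
      · rw [if_neg, h]; exact d.2.1.symm
        rintro rfl; exact (ne_of_lt d.2.2) h
    case hj =>
      intro u hu
      simp only [Finset.mem_filter, Finset.mem_univ, true_and]
      rcases sortPair_fst_or (v := v) (u := u) (by rwa [SimpleGraph.mem_neighborFinset] at hu)
        with h1 | h1
      · left; rw [h1]
      · right; rw [h1]
    case left =>
      intro d hd
      simp only [Finset.mem_filter, Finset.mem_univ, true_and] at hd
      refine (eq_sortPair _ d ?_).symm
      rcases hd with h | h
      · left; rw [if_pos h]; exact Prod.ext h.symm rfl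
      · have hvne : v ≠ d.1.1 := by rintro rfl; exact (ne_of_lt d.2.2) h
        right; rw [if_neg hvne]; exact Prod.ext rfl h.symm
    case right =>
      intro u hu
      have hadj : G.Adj v u := by rwa [SimpleGraph.mem_neighborFinset] at hu
      rcases sortPair_fst_or (v := v) (u := u) (by rwa [SimpleGraph.mem_neighborFinset] at hu)
        with h1 | h1 <;> rw [h1] <;> simp [hadj.ne]
  · rw [if_neg hvw, Finset.sum_congr rfl (fun d _ => Bmat_mul_ne hvw d)]
    by_cases hadj : G.Adj v w
    · rw [if_pos hadj, Finset.sum_eq_single (sortPair hadj)]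
      · rcases sortPair_fst_or hadj with h | h <;> rw [if_pos] <;> tauto
      · intro d _ hd
        rw [if_neg]
        intro h
        exact hd (eq_sortPair hadj d h)
      · intro h
        exact absurd (Finset.mem_univ _) h
    · rw [if_neg hadj]
      apply Finset.sum_eq_zero
      intro d _
      rw [if_neg]
      rintro (h | h)
      · exact hadj (by have := d.2.1; rw [h] at this; exact this)
      · exact hadj (by have := d.2.1; rw [h] at this; exact this.symm)

lemma Cmat_mul_transpose (v w : V) :
    (Cmat G R * (Cmat G R)ᵀ) v w =
      (if v = w then (G.degree v : R) else if G.Adj v w then -1 else 0) + 1 := by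
  rw [mul_apply, Fintype.sum_sum_type]
  simp only [Cmat, transpose_apply, Matrix.of_apply, Sum.elim_inl, Sum.elim_inr]
  rw [← sum_Bmat_mul (R := R) v w]
  simp



/-- the unoriented edge of an oriented edge -/
def sym2OE (d : OE G) : Sym2 V := s(d.1.1, d.1.2)

lemma sym2OE_injective : Function.Injective (sym2OE (G := G)) := by
  intro d d' h
  rw [sym2OE, sym2OE, Sym2.eq_iff] at h
  apply Subtype.ext
  rcases h with ⟨h1, h2⟩ | ⟨h1, h2⟩
  · exact Prod.ext h1 h2
  · exfalso
    have ha := d.2.2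
    have hb := d'.2.2
    rw [← h1, ← h2] at hb
    exact absurd hb (asymm ha)

/-- the graph spanned by a set of oriented edges -/
def Hgraph (t : Finset (OE G)) : SimpleGraph V :=
  SimpleGraph.fromEdgeSet (↑(t.image sym2OE))

lemma Hgraph_adj {t : Finset (OE G)} {a b : V} :
    (Hgraph t).Adj a b ↔ (∃ d ∈ t, sym2OE d = s(a, b)) ∧ a ≠ b := by
  simp [Hgraph, SimpleGraph.fromEdgeSet_adj]

lemma Hgraph_le {t : Finset (OE G)} : Hgraph t ≤ G := by
  intro a b h
  rw [Hgraph_adj] at h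
  obtain ⟨⟨d, _, hd⟩, _⟩ := h
  rw [sym2OE, Sym2.eq_iff] at hd
  rcases hd with ⟨h1, h2⟩ | ⟨h1, h2⟩
  · rw [← h1, ← h2]; exact d.2.1
  · rw [← h1, ← h2]; exact d.2.1.symm

lemma Hgraph_adj_of_mem {t : Finset (OE G)} {d : OE G} (hd : d ∈ t) :
    (Hgraph t).Adj d.1.1 d.1.2 :=
  Hgraph_adj.mpr ⟨⟨d, hd, rfl⟩, ne_of_lt d.2.2⟩

lemma Hgraph_edgeSet {t : Finset (OE G)} :
    (Hgraph t).edgeSet = ↑(t.image sym2OE) := by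
  rw [Hgraph, SimpleGraph.edgeSet_fromEdgeSet]
  ext x
  simp only [Set.mem_diff, mem_coe, Finset.mem_image, Set.mem_setOf_eq]
  constructor
  · rintro ⟨h, _⟩; exact h
  · rintro ⟨d, hd, rfl⟩
    refine ⟨⟨d, hd, rfl⟩, ?_⟩
    rw [sym2OE, Sym2.mem_diagSet, Sym2.isDiag_iff_proj_eq]
    exact ne_of_lt d.2.2

lemma Bmat_eval (v : V) (d : OE G) :
    Bmat G R v d = (if v = d.1.1 then 1 else 0) - (if v = d.1.2 then 1 else 0) := by
  have hne : d.1.1 ≠ d.1.2 := ne_of_lt d.2.2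
  simp only [Bmat, Matrix.of_apply]
  rcases eq_or_ne v d.1.1 with h1 | h1
  · rw [if_pos h1, if_pos h1, if_neg (h1 ▸ hne)]; ring
  · rcases eq_or_ne v d.1.2 with h2 | h2
    · rw [if_neg h1, if_pos h2, if_neg h1, if_pos h2]; ring
    · rw [if_neg h1, if_neg h2, if_neg h1, if_neg h2]; ring

/-- coefficients expressing the endpoint difference of a walk as a combination of
incidence columns -/
lemma walk_coeffs {t : Finset (OE G)} {a b : V} (w : (Hgraph t).Walk a b) :
    ∃ c : OE G → ℚ, (∀ d, c d ≠ 0 → d ∈ t ∧ sym2OE d ∈ w.edges) ∧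
      ∀ v, ∑ d, c d * Bmat G ℚ v d = (if v = a then 1 else 0) - (if v = b then 1 else 0) := by
  induction w with
  | nil => exact ⟨0, by simp, by simp⟩
  | @cons a x b h p ih =>
    obtain ⟨c, hsupp, hsum⟩ := ih
    have h' := h
    rw [Hgraph_adj] at h'
    obtain ⟨⟨d0, hd0t, hd0⟩, hne⟩ := h'
    rw [sym2OE, Sym2.eq_iff] at hd0
    set c' : OE G → ℚ :=
      c + fun d => if d = d0 then (if d0.1.1 = a then 1 else -1) else 0 with hc'
    have hc'app : ∀ d, c' d = c d + (if d = d0 then (if d0.1.1 = a then (1:ℚ) else -1) else 0) :=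
      fun d => rfl
    refine ⟨c', ?_, ?_⟩
    · intro d hd
      rcases eq_or_ne d d0 with rfl | hdne
      · refine ⟨hd0t, ?_⟩
        have hsym : sym2OE d = s(a, x) := by
          rw [sym2OE]
          rcases hd0 with ⟨h1, h2⟩ | ⟨h1, h2⟩
          · rw [h1, h2]
          · rw [h1, h2, Sym2.eq_swap]
        rw [SimpleGraph.Walk.edges_cons, hsym]
        exact List.mem_cons_self
      · rw [hc'app, if_neg hdne, add_zero] at hd
        obtain ⟨h1, h2⟩ := hsupp d hd
        exact ⟨h1, by rw [SimpleGraph.Walk.edges_cons]; exact List.mem_cons_of_mem _ h2⟩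
    · intro v
      have expand : ∀ d : OE G, c' d * Bmat G ℚ v d =
          c d * Bmat G ℚ v d +
            (if d = d0 then (if d0.1.1 = a then (1:ℚ) else -1) * Bmat G ℚ v d else 0) := by
        intro d
        rw [hc'app]
        rcases eq_or_ne d d0 with rfl | hdne
        · rw [if_pos rfl, if_pos rfl]; ring
        · rw [if_neg hdne, if_neg hdne]; ring
      rw [Finset.sum_congr rfl fun d _ => expand d, Finset.sum_add_distrib, hsum,
        Finset.sum_ite_eq' univ d0 (fun d => (if d0.1.1 = a then (1:ℚ) else -1) * Bmat G ℚ v d),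
        if_pos (Finset.mem_univ _)]
      rcases hd0 with ⟨h1, h2⟩ | ⟨h1, h2⟩
      · rw [if_pos h1, Bmat_eval, h1, h2]
        ring
      · have hd011 : d0.1.1 ≠ a := by
          rw [h1]; exact fun hxa => hne (hxa.symm)
        rw [if_neg hd011, Bmat_eval, h1, h2]
        ring


section Eval

variable (s : Finset (OE G ⊕ Unit))

/-- edges used by a column set -/
def tOf : Finset (OE G) := univ.filter (fun d => Sum.inl d ∈ s)

variable {s}

lemma mem_tOf {d : OE G} : d ∈ tOf (G := G) s ↔ Sum.inl d ∈ s := by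
  simp [tOf]

lemma sum_via_e (e : V ≃ ↥s) (g : (OE G ⊕ Unit) → ℚ) (hg : ∀ k, k ∉ s → g k = 0) :
    ∑ j : V, g ((e j : OE G ⊕ Unit)) = ∑ k, g k := by
  rw [Equiv.sum_comp e (fun x : ↥s => g (x : OE G ⊕ Unit))]
  rw [Finset.sum_coe_sort s g]
  exact (Finset.sum_subset (Finset.subset_univ s) (fun k _ hk => hg k hk))

lemma det_submatrix_no_unit [Nonempty V] (e : V ≃ ↥s) (hs : Sum.inr () ∉ s) :
    det ((Cmat G ℚ).submatrix id (fun i => ((e i : ↥s) : OE G ⊕ Unit))) = 0 := by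
  rw [← Matrix.exists_vecMul_eq_zero_iff]
  refine ⟨fun _ => 1, ?_, ?_⟩
  · intro h0
    have := congr_fun h0 (Classical.arbitrary V)
    simpa using this
  · funext j
    have hin := (e j).2
    rw [Matrix.vecMul, Pi.zero_apply]
    simp only [dotProduct, Matrix.submatrix_apply, id_eq, one_mul]
    rcases hk : ((e j : ↥s) : OE G ⊕ Unit) with d | u
    · simp only [Cmat, Matrix.of_apply, Sum.elim_inl]
      exact Bmat_col_sum d
    · exfalso
      rw [hk] at hin
      cases u
      exact hs hin

lemma det_submatrix_not_connected [Nonempty V] (e : V ≃ ↥s)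
    (hs : ¬ (Hgraph (tOf s)).Connected) :
    det ((Cmat G ℚ).submatrix id (fun i => ((e i : ↥s) : OE G ⊕ Unit))) = 0 := by
  classical
  have hpre : ¬ (Hgraph (tOf s)).Preconnected :=
    fun h => hs ((SimpleGraph.connected_iff _).mpr ⟨h, inferInstance⟩)
  rw [SimpleGraph.Preconnected] at hpre
  push_neg at hpre
  obtain ⟨u, w0, hUW⟩ := hpre
  set Rc : ℚ := ((univ.filter (fun v => (Hgraph (tOf s)).Reachable u v)).card : ℚ) with hRc
  set x : V → ℚ :=
    fun v => (Fintype.card V : ℚ) * (if (Hgraph (tOf s)).Reachable u v then 1 else 0) - Rc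
    with hx
  rw [← Matrix.exists_vecMul_eq_zero_iff]
  refine ⟨x, ?_, ?_⟩
  · intro h0
    have h1 := congr_fun h0 w0
    simp only [hx, Pi.zero_apply] at h1
    simp only [if_neg hUW, mul_zero, zero_sub, neg_eq_zero] at h1
    rw [hRc] at h1
    norm_cast at h1
    rw [Finset.card_eq_zero, Finset.filter_eq_empty_iff] at h1
    exact h1 (Finset.mem_univ u) (SimpleGraph.Reachable.refl u)
  · funext j
    have hin := (e j).2
    rw [Matrix.vecMul, Pi.zero_apply]
    simp only [dotProduct, Matrix.submatrix_apply, id_eq]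
    rcases hk : ((e j : ↥s) : OE G ⊕ Unit) with d | _
    · simp only [Cmat, Matrix.of_apply, Sum.elim_inl]
      rw [Bmat_weighted_sum x d]
      have hd : d ∈ tOf s := by
        rw [mem_tOf, ← hk]; exact hin
      have hadj : (Hgraph (tOf s)).Adj d.1.1 d.1.2 := Hgraph_adj_of_mem hd
      have hiff : (Hgraph (tOf s)).Reachable u d.1.1 ↔ (Hgraph (tOf s)).Reachable u d.1.2 :=
        ⟨fun h => h.trans hadj.reachable, fun h => h.trans hadj.symm.reachable⟩
      simp only [hx]
      rw [if_congr hiff rfl rfl]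
      ring
    · simp only [Cmat, Matrix.of_apply, Sum.elim_inr, mul_one]
      rw [hx]
      rw [Finset.sum_sub_distrib, ← Finset.mul_sum, Finset.sum_boole, Finset.sum_const,
        Finset.card_univ, nsmul_eq_mul, hRc]
      ring

lemma reach_del {H : SimpleGraph V} {a b : V} {x y : V} (w : H.Walk x y) :
    (H.deleteEdges {s(a,b)}).Reachable x y ∨ (H.deleteEdges {s(a,b)}).Reachable x a ∨
      (H.deleteEdges {s(a,b)}).Reachable x b := by
  induction w with
  | nil => exact Or.inl (SimpleGraph.Reachable.refl _)
  | @cons x z y h p ih =>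
    by_cases he : s(x, z) = s(a, b)
    · rw [Sym2.eq_iff] at he
      rcases he with ⟨rfl, rfl⟩ | ⟨rfl, rfl⟩
      · exact Or.inr (Or.inl (SimpleGraph.Reachable.refl _))
      · exact Or.inr (Or.inr (SimpleGraph.Reachable.refl _))
    · have hadj : (H.deleteEdges {s(a,b)}).Adj x z := by
        rw [SimpleGraph.deleteEdges_adj]
        exact ⟨h, by simpa using he⟩
      rcases ih with h1 | h1 | h1
      · exact Or.inl (hadj.reachable.trans h1)
      · exact Or.inr (Or.inl (hadj.reachable.trans h1))
      · exact Or.inr (Or.inr (hadj.reachable.trans h1))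

lemma det_submatrix_not_acyclic (e : V ≃ ↥s) (hs : ¬ (Hgraph (tOf s)).IsAcyclic) :
    det ((Cmat G ℚ).submatrix id (fun i => ((e i : ↥s) : OE G ⊕ Unit))) = 0 := by
  classical
  rw [SimpleGraph.IsAcyclic] at hs
  push_neg at hs
  obtain ⟨v0, w, hw⟩ := hs
  cases w with
  | nil => exact absurd rfl hw.ne_nil
  | @cons _ x _ h p =>
    have h' := h
    rw [Hgraph_adj] at h'
    obtain ⟨⟨d0, hd0t, hd0⟩, hne⟩ := h'
    obtain ⟨c, hsupp, hsum⟩ := walk_coeffs p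
    have hcd0 : c d0 = 0 := by
      by_contra hc
      have h2 := (hsupp d0 hc).2
      have h3 : sym2OE d0 ∈ p.edges := h2
      have h4 := hw.edges_nodup
      rw [SimpleGraph.Walk.edges_cons, List.nodup_cons] at h4
      rw [hd0] at h3
      exact h4.1 h3
    rw [sym2OE, Sym2.eq_iff] at hd0
    set sgn : ℚ := if d0.1.1 = v0 then 1 else -1 with hsgn
    set ctot : OE G → ℚ := fun d => c d + (if d = d0 then sgn else 0) with hctot
    have hctot0 : ∀ d, d ∉ tOf s → ctot d = 0 := by
      intro d hd
      simp only [hctot]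
      rw [if_neg (by rintro rfl; exact hd hd0t), add_zero]
      by_contra hc
      exact hd (hsupp d hc).1
    have hctotd0 : ctot d0 ≠ 0 := by
      simp only [hctot, if_pos rfl, hcd0, zero_add, hsgn]
      split_ifs <;> norm_num
    have hksum : ∀ v, ∑ d, ctot d * Bmat G ℚ v d = 0 := by
      intro v
      have expand : ∀ d : OE G, ctot d * Bmat G ℚ v d =
          c d * Bmat G ℚ v d + (if d = d0 then sgn * Bmat G ℚ v d else 0) := by
        intro d
        simp only [hctot]
        rcases eq_or_ne d d0 with rfl | hdne
        · rw [if_pos rfl, if_pos rfl]; ring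
        · rw [if_neg hdne, if_neg hdne]; ring
      rw [Finset.sum_congr rfl fun d _ => expand d, Finset.sum_add_distrib, hsum v,
        Finset.sum_ite_eq' univ d0 (fun d => sgn * Bmat G ℚ v d), if_pos (Finset.mem_univ _)]
      rcases hd0 with ⟨h1, h2⟩ | ⟨h1, h2⟩
      · rw [hsgn, if_pos h1, Bmat_eval, h1, h2]; ring
      · have : d0.1.1 ≠ v0 := by rw [h1]; exact fun hxa => hne hxa.symm
        rw [hsgn, if_neg this, Bmat_eval, h1, h2]; ring
    rw [← Matrix.exists_mulVec_eq_zero_iff]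
    refine ⟨fun j => Sum.elim ctot (fun _ => (0:ℚ)) ((e j : ↥s) : OE G ⊕ Unit), ?_, ?_⟩
    · intro h0
      have hj0 : ((e (e.symm ⟨Sum.inl d0, mem_tOf.mp hd0t⟩) : ↥s) : OE G ⊕ Unit) = Sum.inl d0 := by
        rw [Equiv.apply_symm_apply]
      have h1 := congr_fun h0 (e.symm ⟨Sum.inl d0, mem_tOf.mp hd0t⟩)
      rw [hj0] at h1
      exact hctotd0 h1
    · funext v
      rw [Matrix.mulVec, Pi.zero_apply]
      simp only [dotProduct, Matrix.submatrix_apply, id_eq]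
      rw [sum_via_e e (fun k => Cmat G ℚ v k * Sum.elim ctot (fun _ => (0:ℚ)) k) ?_]
      · rw [Fintype.sum_sum_type]
        simp only [Sum.elim_inl, Sum.elim_inr, mul_zero, Finset.sum_const, smul_zero, add_zero]
        rw [← hksum v]
        refine Finset.sum_congr rfl fun d _ => ?_
        simp only [Cmat, Matrix.of_apply, Sum.elim_inl]
        ring
      · intro k hk
        rcases k with d | u
        · simp only [Sum.elim_inl]
          rw [hctot0 d (fun hd => hk (mem_tOf.mp hd)), mul_zero]
        · simp only [Sum.elim_inr, mul_zero]

lemma Cmat_cast (v : V) (k : OE G ⊕ Unit) :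
    ((Cmat G ℤ v k : ℤ) : ℚ) = Cmat G ℚ v k := by
  rcases k with d | u
  · simp only [Cmat, Matrix.of_apply, Sum.elim_inl, Bmat]
    split_ifs <;> norm_num
  · simp [Cmat]

lemma det_updateCol_finset_sum {ι : Type*} (A : Matrix V V ℚ) (j : V)
    (t : Finset ι) (u : ι → V → ℚ) :
    det (A.updateCol j (∑ i ∈ t, u i)) = ∑ i ∈ t, det (A.updateCol j (u i)) := by
  classical
  induction t using Finset.induction with
  | empty =>
    rw [Finset.sum_empty, Finset.sum_empty]
    exact Matrix.det_eq_zero_of_column_eq_zero j (fun i => by simp [Matrix.updateCol_self])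
  | @insert a t ha ih =>
    rw [Finset.sum_insert ha, Finset.sum_insert ha, Matrix.det_updateCol_add, ih]

lemma detsq_submatrix_tree [Nonempty V] (e : V ≃ ↥s) (hinr : Sum.inr () ∈ s)
    (hT : (Hgraph (tOf s)).IsTree) :
    (det ((Cmat G ℚ).submatrix id (fun i => ((e i : ↥s) : OE G ⊕ Unit)))) ^ 2
      = (Fintype.card V : ℚ) ^ 2 := by
  classical
  set H : SimpleGraph V := Hgraph (tOf s) with hH
  set M : Matrix V V ℚ :=
    (Cmat G ℚ).submatrix id (fun i => ((e i : ↥s) : OE G ⊕ Unit)) with hM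
  have r : V := Classical.arbitrary V
  set j0 : V := e.symm ⟨Sum.inr (), hinr⟩ with hj0
  have hej0 : ((e j0 : ↥s) : OE G ⊕ Unit) = Sum.inr () := by
    rw [hj0, Equiv.apply_symm_apply]
  have hnotinr : ∀ j : V, j ≠ j0 → ∀ u : Unit, ((e j : ↥s) : OE G ⊕ Unit) ≠ Sum.inr u := by
    intro j hj u hju
    apply hj
    apply e.injective
    apply Subtype.ext
    rw [hju, hej0]
  have hMj0 : ∀ v, M v j0 = 1 := by
    intro v
    rw [hM, Matrix.submatrix_apply, hej0]
    simp [Cmat]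
  set δr : V → ℚ := fun v => if v = r then 1 else 0 with hδr
  set M' : Matrix V V ℚ := M.updateCol j0 δr with hM'
  -- kernel lemma
  have key0 : ∀ w : V, det (M.updateCol j0
      (fun v => (if v = w then (1:ℚ) else 0) - (if v = r then 1 else 0))) = 0 := by
    intro w
    obtain ⟨p⟩ := hT.isConnected w r
    obtain ⟨c, hsupp, hsum⟩ := walk_coeffs p
    rw [← Matrix.exists_mulVec_eq_zero_iff]
    refine ⟨fun j => if j = j0 then (-1 : ℚ)
      else Sum.elim c (fun _ => (0:ℚ)) ((e j : ↥s) : OE G ⊕ Unit), ?_, ?_⟩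
    · intro h0
      have h1 := congr_fun h0 j0
      rw [if_pos rfl, Pi.zero_apply] at h1
      norm_num at h1
    · funext v
      rw [Matrix.mulVec, Pi.zero_apply]
      simp only [dotProduct]
      have hterm : ∀ j : V, (M.updateCol j0
            (fun v => (if v = w then (1:ℚ) else 0) - (if v = r then 1 else 0))) v j *
            (if j = j0 then (-1 : ℚ)
              else Sum.elim c (fun _ => (0:ℚ)) ((e j : ↥s) : OE G ⊕ Unit)) =
          (if j = j0 then -((if v = w then (1:ℚ) else 0) - (if v = r then 1 else 0)) else
            M v j * Sum.elim c (fun _ => (0:ℚ)) ((e j : ↥s) : OE G ⊕ Unit)) := by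
        intro j
        rcases eq_or_ne j j0 with rfl | hj
        · rw [Matrix.updateCol_apply, if_pos rfl, if_pos rfl, if_pos rfl]
          ring
        · rw [Matrix.updateCol_apply, if_neg hj, if_neg hj, if_neg hj]
      rw [Finset.sum_congr rfl fun j _ => hterm j, Finset.sum_ite]
      have hfilter1 : univ.filter (fun j : V => j = j0) = {j0} := by
        ext j; simp
      have hfilter2 : (univ.filter (fun j : V => ¬ j = j0)) = univ.erase j0 := by
        ext j; simp [Finset.mem_erase, and_comm]
      rw [hfilter1, hfilter2, Finset.sum_singleton]
      have herase : ∑ j ∈ univ.erase j0,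
          M v j * Sum.elim c (fun _ => (0:ℚ)) ((e j : ↥s) : OE G ⊕ Unit) =
          ∑ j : V, M v j * Sum.elim c (fun _ => (0:ℚ)) ((e j : ↥s) : OE G ⊕ Unit) := by
        apply Finset.sum_erase
        rw [hej0]
        simp
      rw [herase]
      have hmain : ∑ j : V, M v j * Sum.elim c (fun _ => (0:ℚ)) ((e j : ↥s) : OE G ⊕ Unit) =
          (if v = w then (1:ℚ) else 0) - (if v = r then 1 else 0) := by
        have := sum_via_e e
          (fun k => Cmat G ℚ v k * Sum.elim c (fun _ => (0:ℚ)) k) ?_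
        · rw [hM]
          simp only [Matrix.submatrix_apply, id_eq]
          rw [this, Fintype.sum_sum_type]
          simp only [Sum.elim_inl, Sum.elim_inr, mul_zero, Finset.sum_const, smul_zero, add_zero]
          rw [← hsum v]
          refine Finset.sum_congr rfl fun d _ => ?_
          simp only [Cmat, Matrix.of_apply, Sum.elim_inl]
          ring
        · intro k hk
          rcases k with d | u
          · simp only [Sum.elim_inl]
            have : c d = 0 := by
              by_contra hc
              exact hk (mem_tOf.mp (hsupp d hc).1)
            rw [this, mul_zero]
          · simp only [Sum.elim_inr, mul_zero]
      rw [hmain]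
      ring
  -- det M = N * det M'
  have hdetM : det M = (Fintype.card V : ℚ) * det M' := by
    have hones : (fun v => M v j0) =
        (Fintype.card V : ℚ) • δr + fun v => ∑ w : V,
          ((if v = w then (1:ℚ) else 0) - (if v = r then 1 else 0)) := by
      funext v
      rw [Pi.add_apply, Pi.smul_apply, smul_eq_mul, hMj0 v]
      rw [Finset.sum_sub_distrib, Finset.sum_ite_eq univ v (fun _ => (1:ℚ)),
        if_pos (Finset.mem_univ v), Finset.sum_const, Finset.card_univ, nsmul_eq_mul]
      simp only [hδr]
      split_ifs <;> ring
    calc det M = det (M.updateCol j0 (fun v => M v j0)) := by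
          rw [Matrix.updateCol_eq_self]
      _ = det (M.updateCol j0 ((Fintype.card V : ℚ) • δr)) +
            det (M.updateCol j0 (fun v => ∑ w : V,
              ((if v = w then (1:ℚ) else 0) - (if v = r then 1 else 0)))) := by
          rw [hones, Matrix.det_updateCol_add]
      _ = (Fintype.card V : ℚ) * det M' := by
          have h1 : det (M.updateCol j0 ((Fintype.card V : ℚ) • δr)) =
              (Fintype.card V : ℚ) * det M' := by
            rw [Matrix.det_updateCol_smul, hM']
          have h2 : det (M.updateCol j0 (fun v => ∑ w : V,
              ((if v = w then (1:ℚ) else 0) - (if v = r then 1 else 0)))) = 0 := by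
            have hfun : (fun v => ∑ w : V,
                ((if v = w then (1:ℚ) else 0) - (if v = r then 1 else 0))) =
                ∑ w : V, fun v => ((if v = w then (1:ℚ) else 0) - (if v = r then 1 else 0)) := by
              funext v
              rw [Finset.sum_apply]
            rw [hfun, det_updateCol_finset_sum]
            exact Finset.sum_eq_zero fun w _ => key0 w
          rw [h1, h2, add_zero]
  -- integral inverse: (det M')^2 = 1
  have hM'sq : det M' ^ 2 = 1 := by
    set Mz : Matrix V V ℤ := Matrix.of fun v j =>
      if j = j0 then (if v = r then 1 else 0) else Cmat G ℤ v ((e j : ↥s) : OE G ⊕ Unit)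
      with hMz
    have hmap : Mz.map (Int.cast : ℤ → ℚ) = M' := by
      ext v j
      rw [Matrix.map_apply, hMz, Matrix.of_apply]
      rcases eq_or_ne j j0 with rfl | hj
      · rw [if_pos rfl, hM', Matrix.updateCol_apply, if_pos rfl, hδr]
        simp only [apply_ite (fun z : ℤ => (z : ℚ)), Int.cast_one, Int.cast_zero]
      · rw [if_neg hj, hM', Matrix.updateCol_apply, if_neg hj, hM,
          Matrix.submatrix_apply, id_eq, Cmat_cast]
    set Hd : OE G → SimpleGraph V := fun d => H.deleteEdges {sym2OE d} with hHd
    have hbridge : ∀ d ∈ tOf s, ¬ (Hd d).Reachable d.1.1 d.1.2 := by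
      intro d hd
      have hadj : H.Adj d.1.1 d.1.2 := Hgraph_adj_of_mem hd
      have hmem : sym2OE d ∈ H.edgeSet := hadj
      have hb := (SimpleGraph.isAcyclic_iff_forall_edge_isBridge.mp hT.IsAcyclic) hmem
      rw [sym2OE, SimpleGraph.isBridge_iff] at hb
      exact hb
    have hone : ∀ d ∈ tOf s, (Hd d).Reachable r d.1.1 ∨ (Hd d).Reachable r d.1.2 := by
      intro d hd
      obtain ⟨p⟩ := hT.isConnected r d.1.1
      rcases reach_del (a := d.1.1) (b := d.1.2) p with h1 | h1 | h1
      · exact Or.inl h1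
      · exact Or.inl h1
      · exact Or.inr h1
    set sgn : OE G → ℤ := fun d => if (Hd d).Reachable r d.1.1 then -1 else 1 with hsgn
    set xd : OE G → V → ℤ := fun d v => if (Hd d).Reachable r v then 0 else sgn d with hxd
    set P : Matrix V V ℤ := Matrix.of fun j v =>
      if j = j0 then 1 else Sum.elim (fun d => xd d v) (fun _ => 0) ((e j : ↥s) : OE G ⊕ Unit)
      with hP
    have hPM : P * Mz = 1 := by
      ext j j'
      rw [Matrix.mul_apply]
      rcases eq_or_ne j j0 with rfl | hj <;> rcases eq_or_ne j' j0 with rfl | hj'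
      · rw [Matrix.one_apply_eq]
        have hsummand : ∀ v : V, P j0 v * Mz v j0 = (if v = r then (1:ℤ) else 0) := by
          intro v
          rw [hP, Matrix.of_apply, if_pos rfl, hMz, Matrix.of_apply, if_pos rfl, one_mul]
        rw [Finset.sum_congr rfl fun v _ => hsummand v,
          Finset.sum_ite_eq' univ r (fun _ => (1:ℤ)), if_pos (Finset.mem_univ r)]
      · rw [Matrix.one_apply_ne (Ne.symm hj')]
        rcases hk : ((e j' : ↥s) : OE G ⊕ Unit) with d | u
        · have hsummand : ∀ v : V, P j0 v * Mz v j' = Bmat G ℤ v d := by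
            intro v
            rw [hP, Matrix.of_apply, if_pos rfl, hMz, Matrix.of_apply, if_neg hj', hk, one_mul]
            rfl
          rw [Finset.sum_congr rfl fun v _ => hsummand v]
          exact Bmat_col_sum d
        · exact absurd hk (hnotinr j' hj' u)
      · rw [Matrix.one_apply_ne hj]
        rcases hk : ((e j : ↥s) : OE G ⊕ Unit) with d | u
        · have hsummand : ∀ v : V, P j v * Mz v j0 = (if v = r then xd d r else 0) := by
            intro v
            rw [hP, Matrix.of_apply, if_neg hj, hk, Sum.elim_inl, hMz, Matrix.of_apply,
              if_pos rfl]
            rcases eq_or_ne v r with rfl | hv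
            · rw [if_pos rfl, if_pos rfl, mul_one]
            · rw [if_neg hv, if_neg hv, mul_zero]
          rw [Finset.sum_congr rfl fun v _ => hsummand v,
            Finset.sum_ite_eq' univ r (fun _ => xd d r), if_pos (Finset.mem_univ r)]
          simp only [hxd]
          rw [if_pos (SimpleGraph.Reachable.refl r)]
        · exact absurd hk (hnotinr j hj u)
      · rcases hk : ((e j : ↥s) : OE G ⊕ Unit) with d | u
        swap
        · exact absurd hk (hnotinr j hj u)
        rcases hk' : ((e j' : ↥s) : OE G ⊕ Unit) with d' | u
        swap
        · exact absurd hk' (hnotinr j' hj' u)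
        have hd : d ∈ tOf s := by
          rw [mem_tOf]
          have := (e j).2
          rwa [hk] at this
        have hd' : d' ∈ tOf s := by
          rw [mem_tOf]
          have := (e j').2
          rwa [hk'] at this
        have hsummand : ∀ v : V, P j v * Mz v j' = xd d v * Bmat G ℤ v d' := by
          intro v
          rw [hP, Matrix.of_apply, if_neg hj, hk, Sum.elim_inl, hMz, Matrix.of_apply,
            if_neg hj', hk']
          rfl
        rw [Finset.sum_congr rfl fun v _ => hsummand v, Bmat_weighted_sum (R := ℤ) (xd d) d']
        rcases eq_or_ne d d' with rfl | hdd
        · have hjj' : j = j' := by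
            apply e.injective
            apply Subtype.ext
            rw [hk, hk']
          rw [hjj', Matrix.one_apply_eq]
          simp only [hxd, hsgn]
          rcases hone d hd with h1 | h1
          · have h2 : ¬ (Hd d).Reachable r d.1.2 := by
              intro h2
              exact hbridge d hd (h1.symm.trans h2)
            rw [if_pos h1, if_neg h2, if_pos h1]
            norm_num
          · have h2 : ¬ (Hd d).Reachable r d.1.1 := by
              intro h2
              exact hbridge d hd (h2.symm.trans h1)
            rw [if_neg h2, if_neg h2, if_pos h1]
            norm_num
        · have hjj' : j ≠ j' := by
            intro hja
            apply hdd
            have : (Sum.inl d : OE G ⊕ Unit) = Sum.inl d' := by rw [← hk, ← hk', hja]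
            exact Sum.inl.inj this
          rw [Matrix.one_apply_ne hjj']
          have hadj' : (Hd d).Adj d'.1.1 d'.1.2 := by
            rw [hHd]
            simp only
            rw [SimpleGraph.deleteEdges_adj]
            refine ⟨Hgraph_adj_of_mem hd', ?_⟩
            simp only [Set.mem_singleton_iff]
            exact fun hcc => hdd (sym2OE_injective hcc.symm)
          have hiff : (Hd d).Reachable r d'.1.1 ↔ (Hd d).Reachable r d'.1.2 :=
            ⟨fun h => h.trans hadj'.reachable, fun h => h.trans hadj'.symm.reachable⟩
          simp only [hxd]
          rw [if_congr hiff rfl rfl]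
          ring
    have hunit : IsUnit (det Mz) := by
      have h1 : det P * det Mz = 1 := by
        rw [← Matrix.det_mul, hPM, Matrix.det_one]
      exact IsUnit.of_mul_eq_one _ (by rw [mul_comm]; exact h1)
    have hdetz : det Mz = 1 ∨ det Mz = -1 := Int.isUnit_iff.mp hunit |>.imp id id
    have hcast : det M' = ((det Mz : ℤ) : ℚ) := by
      have h2 := RingHom.map_det (Int.castRingHom ℚ) Mz
      rw [RingHom.mapMatrix_apply, Int.coe_castRingHom] at h2
      rw [← hmap, ← h2]
    rcases hdetz with h | h <;> rw [hcast, h] <;> norm_num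
  rw [hdetM, mul_pow, hM'sq, mul_one]

lemma sym2OE_sortPair {a b : V} (h : G.Adj a b) : sym2OE (sortPair h) = s(a, b) := by
  unfold sym2OE
  rcases sortPair_fst_or h with h1 | h1 <;> rw [h1]
  exact Sym2.eq_swap

lemma s_eq_insert (hinr : Sum.inr () ∈ s) :
    s = insert (Sum.inr ()) ((tOf s).image Sum.inl) := by
  ext k
  constructor
  · intro hk
    rcases k with d | u
    · exact Finset.mem_insert_of_mem (Finset.mem_image_of_mem _ (mem_tOf.mpr hk))
    · cases u; exact Finset.mem_insert_self _ _
  · intro hk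
    rcases Finset.mem_insert.mp hk with h | h
    · rw [h]; exact hinr
    · obtain ⟨d, hd, rfl⟩ := Finset.mem_image.mp h
      exact mem_tOf.mp hd

lemma tOf_insert (t : Finset (OE G)) :
    tOf (insert (Sum.inr ()) (t.image Sum.inl)) = t := by
  ext d
  rw [mem_tOf, Finset.mem_insert]
  simp [Sum.inl_injective.eq_iff]

lemma edgeFinset_Hgraph (t : Finset (OE G)) [Fintype ((Hgraph t).edgeSet)] :
    (Hgraph t).edgeFinset = t.image sym2OE := by
  ext x
  rw [SimpleGraph.mem_edgeFinset, Hgraph_edgeSet, Finset.mem_coe]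

lemma card_s_of_tree (hinr : Sum.inr () ∈ s) (hT : (Hgraph (tOf s)).IsTree) :
    s.card = Fintype.card V := by
  classical
  haveI : Fintype ((Hgraph (tOf s)).edgeSet) := (Set.toFinite _).fintype
  have h1 := hT.card_edgeFinset
  rw [edgeFinset_Hgraph, Finset.card_image_of_injective _ sym2OE_injective] at h1
  have h2 : s.card = (tOf s).card + 1 := by
    conv_lhs => rw [s_eq_insert hinr]
    rw [Finset.card_insert_of_notMem (by simp),
      Finset.card_image_of_injective _ Sum.inl_injective]
  rw [h2, h1]

open scoped Classical in
lemma detsq_classify [Nonempty V] :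
    detsq (Cmat G ℚ) s =
      if ((Hgraph (tOf s)).IsTree ∧ Sum.inr () ∈ s) then (Fintype.card V : ℚ) ^ 2 else 0 := by
  by_cases hcard : Fintype.card V = s.card
  · have e : V ≃ ↥s := Fintype.equivOfCardEq (hcard.trans (Fintype.card_coe s).symm)
    rw [detsq_eq (Cmat G ℚ) e]
    by_cases hinr : Sum.inr () ∈ s
    · by_cases hT : (Hgraph (tOf s)).IsTree
      · rw [if_pos ⟨hT, hinr⟩]
        exact detsq_submatrix_tree e hinr hT
      · rw [if_neg (fun hc => hT hc.1)]
        rw [SimpleGraph.isTree_iff] at hT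
        by_cases hconn : (Hgraph (tOf s)).Connected
        · have hacy : ¬ (Hgraph (tOf s)).IsAcyclic := fun h => hT ⟨hconn, h⟩
          rw [det_submatrix_not_acyclic e hacy]
          norm_num
        · rw [det_submatrix_not_connected e hconn]
          norm_num
    · rw [if_neg (fun hc => hinr hc.2), det_submatrix_no_unit e hinr]
      norm_num
  · rw [detsq_of_card_ne _ hcard, if_neg ?_]
    rintro ⟨hT, hinr⟩
    exact hcard (card_s_of_tree hinr hT).symm

open scoped Classical in
lemma det_CC [Nonempty V] :
    det (Cmat G ℚ * (Cmat G ℚ)ᵀ) = (Fintype.card V : ℚ) ^ 2 *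
      ((univ.filter (fun t : Finset (OE G) => (Hgraph t).IsTree)).card : ℚ) := by
  rw [det_mul_transpose_eq_sum_detsq]
  rw [Finset.sum_congr rfl (fun s _ => detsq_classify (s := s))]
  rw [Finset.sum_ite, Finset.sum_const_zero, add_zero, Finset.sum_const, nsmul_eq_mul]
  have hbij : (univ.filter (fun s : Finset (OE G ⊕ Unit) =>
      (Hgraph (tOf s)).IsTree ∧ Sum.inr () ∈ s)).card =
      (univ.filter (fun t : Finset (OE G) => (Hgraph t).IsTree)).card := by
    refine Finset.card_bij' (fun s _ => tOf s)
      (fun t _ => insert (Sum.inr ()) (t.image Sum.inl)) ?_ ?_ ?_ ?_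
    · intro s hs
      simp only [Finset.mem_filter, Finset.mem_univ, true_and] at hs ⊢
      exact hs.1
    · intro t ht
      simp only [Finset.mem_filter, Finset.mem_univ, true_and] at ht ⊢
      rw [tOf_insert]
      exact ⟨ht, Finset.mem_insert_self _ _⟩
    · intro s hs
      simp only [Finset.mem_filter, Finset.mem_univ, true_and] at hs
      exact (s_eq_insert hs.2).symm
    · intro t ht
      exact tOf_insert t
  rw [hbij, mul_comm]

open scoped Classical in
lemma ncard_trees_eq :
    {H : SimpleGraph V | H ≤ G ∧ H.IsTree}.ncard
      = (univ.filter (fun t : Finset (OE G) => (Hgraph t).IsTree)).card := by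
  have key : ∀ t : Finset (OE G),
      univ.filter (fun d : OE G => sym2OE d ∈ (Hgraph t).edgeSet) = t := by
    intro t
    ext d
    simp only [Finset.mem_filter, Finset.mem_univ, true_and, Hgraph_edgeSet, Finset.mem_coe,
      Finset.mem_image]
    constructor
    · rintro ⟨d', hd', hdd⟩
      rwa [← sym2OE_injective hdd]
    · intro hd
      exact ⟨d, hd, rfl⟩
  have himg : {H : SimpleGraph V | H ≤ G ∧ H.IsTree} =
      (fun t : Finset (OE G) => Hgraph t) ''
        ↑(univ.filter (fun t : Finset (OE G) => (Hgraph t).IsTree)) := by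
    ext H
    simp only [Set.mem_image, Finset.coe_filter, Set.mem_setOf_eq, Finset.mem_univ, true_and]
    constructor
    · rintro ⟨hle, hT⟩
      have hHt : Hgraph (univ.filter (fun d : OE G => sym2OE d ∈ H.edgeSet)) = H := by
        have hset : (↑((univ.filter (fun d : OE G => sym2OE d ∈ H.edgeSet)).image sym2OE)
            : Set (Sym2 V)) = H.edgeSet := by
          ext x
          simp only [Finset.coe_image, Set.mem_image, Finset.mem_coe, Finset.mem_filter,
            Finset.mem_univ, true_and]
          constructor
          · rintro ⟨d, hd, rfl⟩
            exact hd
          · intro hx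
            induction x using Sym2.ind with
            | _ a b =>
              have hadj : H.Adj a b := hx
              have hGadj : G.Adj a b := hle hadj
              refine ⟨sortPair hGadj, ?_, sym2OE_sortPair hGadj⟩
              rw [sym2OE_sortPair hGadj]
              exact hx
        rw [Hgraph, hset, SimpleGraph.fromEdgeSet_edgeSet]
      exact ⟨univ.filter (fun d : OE G => sym2OE d ∈ H.edgeSet), by rw [hHt]; exact hT, hHt⟩
    · rintro ⟨t, hT, rfl⟩
      exact ⟨Hgraph_le, hT⟩
  rw [himg, Set.ncard_image_of_injOn ?_, Set.ncard_coe_finset]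
  intro t1 _ t2 _ heq
  dsimp only at heq
  rw [← key t1, ← key t2, heq]

open scoped Classical in
lemma det_CC_ncard [Nonempty V] :
    det (Cmat G ℚ * (Cmat G ℚ)ᵀ) = (Fintype.card V : ℚ) ^ 2 *
      (({H : SimpleGraph V | H ≤ G ∧ H.IsTree}.ncard : ℕ) : ℚ) := by
  rw [det_CC, ncard_trees_eq]

end Eval

end Graph

section Hyper

variable {n : ℕ}

/-- weight (number of true coordinates) -/
def wt (S : Fin n → Bool) : ℕ := (univ.filter (fun i => S i = true)).card

/-- character matrix of the hypercube -/
def Pm (n : ℕ) : Matrix (Fin n → Bool) (Fin n → Bool) ℚ :=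
  Matrix.of fun S v => ∏ i, (if S i ∧ v i then (-1 : ℚ) else 1)

lemma sum_prod_bool (g : Fin n → Bool → ℚ) :
    ∑ v : Fin n → Bool, ∏ i, g i (v i) = ∏ i, (g i false + g i true) := by
  calc ∑ v : Fin n → Bool, ∏ i, g i (v i)
      = ∑ v ∈ Fintype.piFinset (fun _ : Fin n => (univ : Finset Bool)), ∏ i, g i (v i) := by
        rw [Fintype.piFinset_univ]
    _ = ∏ i, ∑ b : Bool, g i b := (Finset.prod_univ_sum _ _).symm
    _ = ∏ i, (g i false + g i true) := by
        refine Finset.prod_congr rfl fun i _ => ?_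
        rw [Fintype.sum_bool]
        ring

lemma hamming_filter (x y : Fin n → Bool) :
    hammingDist x y = (univ.filter (fun i => x i ≠ y i)).card := rfl

lemma flip_dist (w : Fin n → Bool) (i : Fin n) :
    hammingDist (Function.update w i (!w i)) w = 1 := by
  rw [hamming_filter]
  have : (univ.filter (fun j => Function.update w i (!w i) j ≠ w j)) = {i} := by
    ext j
    simp only [Finset.mem_filter, Finset.mem_univ, true_and, Finset.mem_singleton]
    rcases eq_or_ne j i with rfl | hj
    · simp [Function.update_self]
    · simp [Function.update_of_ne hj, hj]
  rw [this, Finset.card_singleton]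

lemma exists_flip {v w : Fin n → Bool} (h : hammingDist v w = 1) :
    ∃ i, v = Function.update w i (!w i) := by
  rw [hamming_filter, Finset.card_eq_one] at h
  obtain ⟨a, ha⟩ := h
  refine ⟨a, funext fun j => ?_⟩
  rcases eq_or_ne j a with rfl | hj
  · have hmem : j ∈ univ.filter (fun i => v i ≠ w i) := by
      rw [ha]; exact Finset.mem_singleton_self j
    simp only [Finset.mem_filter, Finset.mem_univ, true_and] at hmem
    rw [Function.update_self]
    revert hmem
    cases v j <;> cases w j <;> simp
  · rw [Function.update_of_ne hj]
    by_contra hne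
    have hmem : j ∈ univ.filter (fun i => v i ≠ w i) := by
      simp only [Finset.mem_filter, Finset.mem_univ, true_and]
      exact hne
    rw [ha, Finset.mem_singleton] at hmem
    exact hj hmem

lemma sum_nbhd (F : (Fin n → Bool) → ℚ) (w : Fin n → Bool) :
    ∑ v ∈ univ.filter (fun v => hammingDist v w = 1), F v
      = ∑ i : Fin n, F (Function.update w i (!w i)) := by
  symm
  refine Finset.sum_bij (fun i _ => Function.update w i (!w i)) ?_ ?_ ?_ ?_
  · intro i _
    simp only [Finset.mem_filter, Finset.mem_univ, true_and]
    exact flip_dist w i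
  · intro a _ b _ hab
    by_contra hne
    have h1 := congr_fun hab a
    rw [Function.update_self, Function.update_of_ne hne] at h1
    exact (by cases w a <;> simp_all : False)
  · intro v hv
    simp only [Finset.mem_filter, Finset.mem_univ, true_and] at hv
    obtain ⟨i, hi⟩ := exists_flip hv
    exact ⟨i, Finset.mem_univ i, hi.symm⟩
  · intro i _
    rfl

lemma chi_flip (S w : Fin n → Bool) (i : Fin n) :
    Pm n S (Function.update w i (!w i)) = (if S i then (-1:ℚ) else 1) * Pm n S w := by
  rw [Pm, Matrix.of_apply, Matrix.of_apply]
  rw [← Finset.prod_erase_mul univ _ (Finset.mem_univ i),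
    ← Finset.prod_erase_mul univ _ (Finset.mem_univ i)]
  have hrest : ∏ j ∈ univ.erase i, (if S j ∧ Function.update w i (!w i) j then (-1:ℚ) else 1)
      = ∏ j ∈ univ.erase i, (if S j ∧ w j then (-1:ℚ) else 1) := by
    refine Finset.prod_congr rfl fun j hj => ?_
    rw [Function.update_of_ne (Finset.mem_erase.mp hj).1]
  rw [hrest, Function.update_self]
  cases hS : S i <;> cases hw : w i <;> simp [hS, hw] <;> ring

lemma chi_bot (w : Fin n → Bool) : Pm n (fun _ => false) w = 1 := by
  rw [Pm, Matrix.of_apply]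
  simp

lemma row_sum (S : Fin n → Bool) :
    ∑ v, Pm n S v = if S = (fun _ => false) then ((2:ℚ))^n else 0 := by
  simp only [Pm, Matrix.of_apply]
  rw [sum_prod_bool (fun i b => if S i ∧ b then (-1:ℚ) else 1)]
  have hfac : ∀ i, ((if S i ∧ false then (-1:ℚ) else 1) + (if S i ∧ true then (-1:ℚ) else 1))
      = if S i then 0 else 2 := by
    intro i
    cases hS : S i <;> simp [hS] <;> try norm_num
  rw [Finset.prod_congr rfl fun i _ => hfac i]
  by_cases hS : S = (fun _ => false)
  · rw [if_pos hS]
    subst hS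
    simp
  · rw [if_neg hS]
    have : ∃ i, S i = true := by
      by_contra hc
      push_neg at hc
      exact hS (funext fun i => by simpa using hc i)
    obtain ⟨i, hi⟩ := this
    exact Finset.prod_eq_zero (Finset.mem_univ i) (by rw [hi]; simp)

lemma sum_sign (S : Fin n → Bool) :
    ∑ i : Fin n, (if S i then (-1:ℚ) else 1) = (n : ℚ) - 2 * (wt S : ℚ) := by
  have : ∀ i, (if S i then (-1:ℚ) else 1) = 1 - 2 * (if S i then (1:ℚ) else 0) := by
    intro i; cases hS : S i <;> simp [hS] <;> ring
  rw [Finset.sum_congr rfl fun i _ => this i, Finset.sum_sub_distrib, ← Finset.mul_sum,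
    Finset.sum_boole, Finset.sum_const, Finset.card_univ, Fintype.card_fin, nsmul_eq_mul, mul_one]
  rw [wt]

lemma PmPmT (S T : Fin n → Bool) :
    (Pm n * (Pm n)ᵀ) S T = if S = T then ((2:ℚ))^n else 0 := by
  rw [Matrix.mul_apply]
  have hsummand : ∀ v : Fin n → Bool, Pm n S v * (Pm n)ᵀ v T =
      ∏ i, ((if S i ∧ v i then (-1:ℚ) else 1) * (if T i ∧ v i then (-1:ℚ) else 1)) := by
    intro v
    rw [Matrix.transpose_apply, Pm, Matrix.of_apply, Matrix.of_apply, Finset.prod_mul_distrib]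
  rw [Finset.sum_congr rfl fun v _ => hsummand v,
    sum_prod_bool (fun i b => (if S i ∧ b then (-1:ℚ) else 1) * (if T i ∧ b then (-1:ℚ) else 1))]
  have hfac : ∀ i, ((if S i ∧ false then (-1:ℚ) else 1) * (if T i ∧ false then (-1:ℚ) else 1) +
      (if S i ∧ true then (-1:ℚ) else 1) * (if T i ∧ true then (-1:ℚ) else 1))
      = if S i = T i then 2 else 0 := by
    intro i
    cases hS : S i <;> cases hT : T i <;> simp [hS, hT] <;> norm_num
  rw [Finset.prod_congr rfl fun i _ => hfac i]
  by_cases hST : S = T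
  · rw [if_pos hST]
    subst hST
    simp
  · rw [if_neg hST]
    have : ∃ i, S i ≠ T i := Function.ne_iff.mp hST
    obtain ⟨i, hi⟩ := this
    exact Finset.prod_eq_zero (Finset.mem_univ i) (by rw [if_neg hi])

lemma detPm_ne_zero : det (Pm n) ≠ 0 := by
  have h1 : Pm n * (Pm n)ᵀ = ((2:ℚ))^n • (1 : Matrix (Fin n → Bool) (Fin n → Bool) ℚ) := by
    ext S T
    rw [PmPmT, Matrix.smul_apply, Matrix.one_apply]
    rcases eq_or_ne S T with rfl | hST
    · rw [if_pos rfl, if_pos rfl, smul_eq_mul, mul_one]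
    · rw [if_neg hST, if_neg hST, smul_eq_mul, mul_zero]
  have h2 : det (Pm n) * det (Pm n) ≠ 0 := by
    have h3 : det (Pm n) * det (Pm n) = det (Pm n * (Pm n)ᵀ) := by
      rw [Matrix.det_mul, Matrix.det_transpose]
    rw [h3, h1, Matrix.det_smul, Matrix.det_one, mul_one]
    positivity
  exact fun h => h2 (by rw [h, mul_zero])

/-- the matrix `L + J` of the hypercube -/
def Amat (n : ℕ) : Matrix (Fin n → Bool) (Fin n → Bool) ℚ :=
  Matrix.of fun v w =>
    (if v = w then (n : ℚ) else if hammingDist v w = 1 then -1 else 0) + 1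

/-- the diagonal eigenvalue vector -/
def Dvec (n : ℕ) : (Fin n → Bool) → ℚ :=
  fun S => 2 * (wt S : ℚ) + (if S = (fun _ => false) then ((2:ℚ))^n else 0)

lemma PA_eq (S w : Fin n → Bool) : (Pm n * Amat n) S w = Dvec n S * Pm n S w := by
  rw [Matrix.mul_apply]
  have hsummand : ∀ v : Fin n → Bool, Pm n S v * Amat n v w =
      ((if v = w then (n : ℚ) * Pm n S v else 0) +
        (if hammingDist v w = 1 then -(Pm n S v) else 0)) + Pm n S v := by
    intro v
    rw [Amat, Matrix.of_apply, mul_add, mul_one]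
    congr 1
    rcases eq_or_ne v w with rfl | hvw
    · rw [if_pos rfl, if_pos rfl, if_neg (by rw [hammingDist_self]; norm_num)]
      ring
    · rw [if_neg hvw, if_neg hvw, zero_add]
      rcases eq_or_ne (hammingDist v w) 1 with hd | hd
      · rw [if_pos hd, if_pos hd]; ring
      · rw [if_neg hd, if_neg hd]; ring
  rw [Finset.sum_congr rfl fun v _ => hsummand v, Finset.sum_add_distrib,
    Finset.sum_add_distrib, Finset.sum_ite_eq' univ w (fun v => (n : ℚ) * Pm n S v),
    if_pos (Finset.mem_univ w), row_sum]
  have hsecond : (∑ v : Fin n → Bool, if hammingDist v w = 1 then -(Pm n S v) else 0)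
      = -(((n : ℚ) - 2 * (wt S : ℚ)) * Pm n S w) := by
    rw [← Finset.sum_filter, sum_nbhd (fun v => -(Pm n S v)) w]
    have : ∀ i : Fin n, -(Pm n S (Function.update w i (!w i)))
        = -((if S i then (-1:ℚ) else 1) * Pm n S w) := by
      intro i; rw [chi_flip]
    rw [Finset.sum_congr rfl fun i _ => this i, Finset.sum_neg_distrib,
      ← Finset.sum_mul, sum_sign]
  rw [hsecond, Dvec]
  rcases eq_or_ne S (fun _ => false) with rfl | hS
  · rw [if_pos rfl, chi_bot]
    have hwt : wt (fun _ : Fin n => false) = 0 := by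
      rw [wt]
      simp
    rw [hwt]
    push_cast
    ring
  · rw [if_neg hS]
    ring

lemma det_Amat :
    det (Amat n) = ((2:ℚ))^n * ∏ i ∈ Finset.Icc 1 n, (2 * (i:ℚ)) ^ (n.choose i) := by
  classical
  have hPA : Pm n * Amat n = Matrix.diagonal (Dvec n) * Pm n := by
    ext S w
    rw [PA_eq, Matrix.diagonal_mul]
  have hdet : det (Pm n) * det (Amat n) = (∏ S, Dvec n S) * det (Pm n) := by
    rw [← Matrix.det_mul, hPA, Matrix.det_mul, Matrix.det_diagonal]
  have hA : det (Amat n) = ∏ S, Dvec n S := by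
    have := hdet
    rw [mul_comm (∏ S, Dvec n S) (det (Pm n))] at this
    exact mul_left_cancel₀ detPm_ne_zero this
  rw [hA]
  -- split off the zero weight vector
  rw [← Finset.mul_prod_erase univ (Dvec n) (Finset.mem_univ (fun _ => false))]
  have h0 : Dvec n (fun _ => false) = ((2:ℚ))^n := by
    rw [Dvec, if_pos rfl]
    have hwt : wt (fun _ : Fin n => false) = 0 := by rw [wt]; simp
    rw [hwt]
    norm_num
  rw [h0]
  congr 1
  have hval : ∀ S ∈ univ.erase (fun _ : Fin n => false), Dvec n S = 2 * (wt S : ℚ) := by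
    intro S hS
    rw [Dvec, if_neg (Finset.mem_erase.mp hS).1, add_zero]
  rw [Finset.prod_congr rfl hval]
  -- fiber by weight
  have hmaps : ∀ S ∈ univ.erase (fun _ : Fin n => false), wt S ∈ Finset.Icc 1 n := by
    intro S hS
    rw [Finset.mem_Icc]
    constructor
    · by_contra hlt
      push_neg at hlt
      interval_cases h : wt S
      rw [wt, Finset.card_eq_zero, Finset.filter_eq_empty_iff] at h
      exact (Finset.mem_erase.mp hS).1
        (funext fun i => by simpa using h (Finset.mem_univ i))
    · calc wt S ≤ Fintype.card (Fin n) := by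
            rw [wt, ← Finset.card_univ]
            exact Finset.card_filter_le _ _
        _ = n := Fintype.card_fin n
  rw [← Finset.prod_fiberwise_of_maps_to hmaps (fun S => 2 * (wt S : ℚ))]
  refine Finset.prod_congr rfl fun i hi => ?_
  have hival : ∀ S ∈ (univ.erase (fun _ : Fin n => false)).filter (fun S => wt S = i),
      2 * (wt S : ℚ) = 2 * (i : ℚ) := by
    intro S hS
    rw [(Finset.mem_filter.mp hS).2]
  rw [Finset.prod_congr rfl hival, Finset.prod_const]
  congr 1
  -- cardinality of the fiber equals choose n i
  have hfe : (univ.erase (fun _ : Fin n => false)).filter (fun S => wt S = i)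
      = univ.filter (fun S : Fin n → Bool => wt S = i) := by
    ext S
    simp only [Finset.mem_filter, Finset.mem_erase, Finset.mem_univ, true_and, and_true]
    constructor
    · rintro ⟨_, h⟩; exact h
    · intro h
      refine ⟨?_, h⟩
      rintro rfl
      rw [wt] at h
      simp at h
      rw [← h] at hi
      simp at hi
  rw [hfe]
  have hcard : (univ.filter (fun S : Fin n → Bool => wt S = i)).card
      = (Finset.powersetCard i (univ : Finset (Fin n))).card := by
    refine Finset.card_bij' (fun S _ => univ.filter (fun j => S j = true))
      (fun t _ => fun j => decide (j ∈ t)) ?_ ?_ ?_ ?_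
    · intro S hS
      simp only [Finset.mem_filter, Finset.mem_univ, true_and] at hS
      rw [Finset.mem_powersetCard]
      exact ⟨Finset.subset_univ _, hS⟩
    · intro t ht
      simp only [Finset.mem_filter, Finset.mem_univ, true_and]
      rw [Finset.mem_powersetCard] at ht
      rw [wt, ← ht.2]
      congr 1
      ext j
      simp
    · intro S _
      funext j
      simp
    · intro t _
      ext j
      simp
  rw [hcard, Finset.card_powersetCard, Finset.card_univ, Fintype.card_fin]

lemma degree_hc [LinearOrder (Fin n → Bool)] [DecidableRel (hypercube n).Adj]
    (w : Fin n → Bool) : (((hypercube n).degree w : ℕ) : ℚ) = n := by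
  have h1 := sum_nbhd (fun _ => (1:ℚ)) w
  rw [Finset.sum_const, Finset.sum_const, Finset.card_univ, Fintype.card_fin] at h1
  have h2 : (hypercube n).neighborFinset w = univ.filter (fun v => hammingDist v w = 1) := by
    ext u
    rw [SimpleGraph.mem_neighborFinset, Finset.mem_filter]
    constructor
    · intro hadj
      refine ⟨Finset.mem_univ u, ?_⟩
      have : hammingDist w u = 1 := hadj
      rwa [hammingDist_comm] at this
    · rintro ⟨_, hd⟩
      show hammingDist w u = 1
      rwa [hammingDist_comm]
  have h3 : (hypercube n).degree w = (univ.filter (fun v => hammingDist v w = 1)).card := by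
    rw [← h2]
    rfl
  rw [h3]
  rw [nsmul_eq_mul, nsmul_eq_mul, mul_one, mul_one] at h1
  exact h1


end Hyper

end HC


open HC in
/-- The number of spanning trees of the hypercube graph `Q_n` is
`2^{−n} ∏_{i=1}^{n} (2i)^{C(n,i)}` (stated multiplied through by `2ⁿ`). -/
theorem hypercube_spanning_tree_count (n : ℕ) :
    {H : SimpleGraph (Fin n → Bool) | H ≤ hypercube n ∧ H.IsTree}.ncard * 2 ^ n =
      ∏ i ∈ Finset.Icc 1 n, (2 * i) ^ ((n).choose i) := by
  classical
  letI : LinearOrder (Fin n → Bool) :=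
    LinearOrder.lift' (fun v => (Fintype.equivFin (Fin n → Bool)) v)
      (fun a b h => (Fintype.equivFin (Fin n → Bool)).injective h)
  haveI hDec : DecidableRel (hypercube n).Adj :=
    fun a b => inferInstanceAs (Decidable (hammingDist a b = 1))
  have hCC : HC.Cmat (hypercube n) ℚ * (HC.Cmat (hypercube n) ℚ)ᵀ = HC.Amat n := by
    ext v w
    rw [HC.Cmat_mul_transpose v w, HC.Amat, Matrix.of_apply]
    congr 1
    rcases eq_or_ne v w with rfl | hvw
    · rw [if_pos rfl, if_pos rfl]
      exact HC.degree_hc v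
    · rw [if_neg hvw, if_neg hvw]
      exact if_congr Iff.rfl rfl rfl
  have h1 := HC.det_CC_ncard (G := hypercube n)
  rw [hCC] at h1
  set T : ℕ := {H : SimpleGraph (Fin n → Bool) | H ≤ hypercube n ∧ H.IsTree}.ncard with hT
  have hsame : ∀ (i1 i2 : DecidableEq (Fin n → Bool)),
      @Matrix.det _ i1 _ ℚ _ (HC.Amat n) = @Matrix.det _ i2 _ ℚ _ (HC.Amat n) := fun i1 i2 => by
    congr!
  have key2 := (HC.det_Amat (n := n)).symm.trans ((hsame _ _).trans h1)
  have hN : ((Fintype.card (Fin n → Bool) : ℕ) : ℚ) = (2:ℚ)^n := by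
    rw [Fintype.card_fun, Fintype.card_bool, Fintype.card_fin]
    push_cast
    ring
  rw [hN] at key2
  have h2 : ((2:ℚ)^n) ≠ 0 := by positivity
  have key : (T : ℚ) * 2^n = ∏ i ∈ Finset.Icc 1 n, (2*(i:ℚ))^(n.choose i) := by
    have h3 : (2:ℚ)^n * (∏ i ∈ Finset.Icc 1 n, (2*(i:ℚ))^(n.choose i))
        = (2:ℚ)^n * ((T : ℚ) * 2^n) := by
      rw [key2]
      ring
    have h4 := mul_left_cancel₀ h2 h3
    rw [h4]
  have hcast : ((T * 2 ^ n : ℕ) : ℚ)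
      = ((∏ i ∈ Finset.Icc 1 n, (2 * i) ^ ((n).choose i) : ℕ) : ℚ) := by
    push_cast
    exact key
  exact_mod_cast hcast
end
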